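/- Let 0 → J →π C →ρ D → 0 be an exact sequence of C*-algebras, and suppose we have a commutative diagram with top row I →φ A →ψ B, vertical *-homomorphisms η: I → J, ζ: A → C, ω: B → D which are injective and nondegenerate (i.e., η(I)J is dense in J, ζ(A)C is dense in C, ω(B)D is dense in D), such that φ(I) is a closed two-sided ideal of A and ψ is surjective. Then the top row 0 → I →φ A →ψ B → 0 is exact. -/

import Mathlib

/-- Abstract exactness lemma: given a commutative diagram of C*-algebras with exact
bottom row, injective nondegenerate vertical maps, `φ(I)` an ideal of `A`, and `ψ`
surjective, the top row `0 → I → A → B → 0` is exact. -/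

noncomputable def auxOrder (I : Type*) [NonUnitalCStarAlgebra I] : PartialOrder I :=
  letI : PartialOrder (Unitization ℂ I) := CStarAlgebra.spectralOrder _
  PartialOrder.lift (Unitization.inr : I → Unitization ℂ I) Unitization.inr_injective

lemma auxSOR (I : Type*) [NonUnitalCStarAlgebra I] :
    letI := auxOrder I
    StarOrderedRing I := by
  letI pU : PartialOrder (Unitization ℂ I) := CStarAlgebra.spectralOrder _
  haveI sU : StarOrderedRing (Unitization ℂ I) := CStarAlgebra.spectralOrderedRing _
  letI := auxOrder I
  refine StarOrderedRing.of_nonneg_iff' ?_ ?_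
  · intro x y h z
    have h' : (x : Unitization ℂ I) ≤ (y : Unitization ℂ I) := h
    show ((z + x : I) : Unitization ℂ I) ≤ ((z + y : I) : Unitization ℂ I)
    rw [Unitization.inr_add, Unitization.inr_add]
    exact add_le_add le_rfl h'
  · intro x
    constructor
    · intro hx
      have hx' : (0 : Unitization ℂ I) ≤ (x : Unitization ℂ I) := by
        have : ((0 : I) : Unitization ℂ I) ≤ (x : Unitization ℂ I) := hx
        rwa [Unitization.inr_zero] at this
      have hsa : IsSelfAdjoint x :=
        (Unitization.isSelfAdjoint_inr (R := ℂ)).mp (.of_nonneg hx')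
      refine ⟨cfcₙ Real.sqrt x, ?_⟩
      have hs : IsSelfAdjoint (cfcₙ Real.sqrt x) := cfcₙ_predicate _ x
      rw [hs.star_eq]
      apply Unitization.inr_injective (R := ℂ)
      rw [Unitization.inr_mul, Unitization.real_cfcₙ_eq_cfc_inr x Real.sqrt Real.sqrt_zero,
        ← cfc_mul _ _ ((x : Unitization ℂ I))]
      have hsp : ∀ r ∈ spectrum ℝ ((x : Unitization ℂ I)), Real.sqrt r * Real.sqrt r = r :=
        fun r hr => Real.mul_self_sqrt (spectrum_nonneg_of_nonneg hx' hr)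
      rw [cfc_congr hsp, cfc_id' ℝ ((x : Unitization ℂ I))]
    · rintro ⟨s, rfl⟩
      show ((0 : I) : Unitization ℂ I) ≤ ((star s * s : I) : Unitization ℂ I)
      rw [Unitization.inr_zero, Unitization.inr_mul, Unitization.inr_star]
      exact star_mul_self_nonneg _

open Filter Topology in
lemma aux_key {I J : Type*} [NonUnitalCStarAlgebra I] [NonUnitalCStarAlgebra J]
    (η : I →⋆ₙₐ[ℂ] J) (hη_inj : Function.Injective η)
    (hη_nd : closure (Submodule.span ℂ {y : J | ∃ x : I, ∃ j : J, y = η x * j} : Set J)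
      = Set.univ)
    (j : J) {ε : ℝ} (hε : 0 < ε) :
    ∃ e : I, ‖j - η e * j‖ < ε := by
  letI := auxOrder I
  haveI := auxSOR I
  set l := CStarAlgebra.approximateUnit I with hldef
  have hl := CStarAlgebra.increasingApproximateUnit I
  haveI hnb : l.NeBot := hl.neBot
  have hηc : Continuous η := (NonUnitalStarAlgHom.isometry η hη_inj).continuous
  -- tendsto on the span
  have hT : ∀ s ∈ Submodule.span ℂ {y : J | ∃ x : I, ∃ k : J, y = η x * k},
      Tendsto (fun e : I => η e * s) l (𝓝 s) := by
    intro s hs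
    induction hs using Submodule.span_induction with
    | mem y hy =>
      obtain ⟨x, k, rfl⟩ := hy
      have h1 : Tendsto (fun e : I => e * x) l (𝓝 x) := hl.tendsto_mul_right x
      have h2 : Continuous fun z : I => η z * k := (hηc.mul continuous_const)
      have h3 : Tendsto (fun e : I => η (e * x) * k) l (𝓝 (η x * k)) :=
        (h2.tendsto x).comp h1
      refine h3.congr fun e => ?_
      rw [map_mul, mul_assoc]
    | zero => simpa using tendsto_const_nhds
    | add u v hu hv ihu ihv =>
      have := ihu.add ihv
      refine this.congr fun e => ?_
      rw [mul_add]
    | smul c u hu ihu =>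
      have := ihu.const_smul c
      refine this.congr fun e => ?_
      rw [mul_smul_comm]
  -- approximate j by an element of the span
  have hj : j ∈ closure (Submodule.span ℂ {y : J | ∃ x : I, ∃ k : J, y = η x * k} : Set J) := by
    rw [hη_nd]; trivial
  rw [Metric.mem_closure_iff] at hj
  obtain ⟨s, hs, hdist⟩ := hj (ε / 3) (by linarith)
  rw [dist_eq_norm] at hdist
  have h3 : ∀ᶠ e in l, ‖η e * s - s‖ < ε / 3 := by
    have h0 : Tendsto (fun e : I => η e * s - s) l (𝓝 (s - s)) :=
      (hT s hs).sub tendsto_const_nhds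
    rw [sub_self] at h0
    have := (h0.norm).eventually (eventually_lt_nhds (show ‖(0:J)‖ < ε / 3 by simpa using by linarith))
    simpa using this
  have h4 : ∀ᶠ e in l, ‖e‖ ≤ 1 := hl.eventually_norm
  obtain ⟨e, he1, he2⟩ := (h3.and h4).exists
  refine ⟨e, ?_⟩
  have hnorm : ‖η e‖ ≤ 1 := by rw [NonUnitalStarAlgHom.norm_map η hη_inj]; exact he2
  have hle : ‖η e * s - η e * j‖ ≤ ‖s - j‖ := by
    calc ‖η e * s - η e * j‖ = ‖η e * (s - j)‖ := by rw [mul_sub]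
    _ ≤ ‖η e‖ * ‖s - j‖ := norm_mul_le _ _
    _ ≤ 1 * ‖s - j‖ := by gcongr
    _ = ‖s - j‖ := one_mul _
  have hsj : ‖s - j‖ < ε / 3 := by rwa [norm_sub_rev] at hdist
  calc ‖j - η e * j‖ = ‖(j - s) + (s - η e * s) + (η e * s - η e * j)‖ := by abel_nf
  _ ≤ ‖(j - s) + (s - η e * s)‖ + ‖η e * s - η e * j‖ := norm_add_le _ _
  _ ≤ ‖j - s‖ + ‖s - η e * s‖ + ‖η e * s - η e * j‖ := by gcongr; exact norm_add_le _ _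
  _ < ε / 3 + ε / 3 + ε / 3 := by
      have : ‖s - η e * s‖ < ε / 3 := by rwa [norm_sub_rev] at he1
      gcongr
      · exact lt_of_le_of_lt hle hsj
  _ = ε := by ring

theorem stmt0
    {I A B J C D : Type*}
    [NonUnitalNormedRing I] [StarRing I] [CStarRing I] [NormedSpace ℂ I]
    [IsScalarTower ℂ I I] [SMulCommClass ℂ I I] [StarModule ℂ I] [CompleteSpace I]
    [NonUnitalNormedRing A] [StarRing A] [CStarRing A] [NormedSpace ℂ A]
    [IsScalarTower ℂ A A] [SMulCommClass ℂ A A] [StarModule ℂ A] [CompleteSpace A]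
    [NonUnitalNormedRing B] [StarRing B] [CStarRing B] [NormedSpace ℂ B]
    [IsScalarTower ℂ B B] [SMulCommClass ℂ B B] [StarModule ℂ B] [CompleteSpace B]
    [NonUnitalNormedRing J] [StarRing J] [CStarRing J] [NormedSpace ℂ J]
    [IsScalarTower ℂ J J] [SMulCommClass ℂ J J] [StarModule ℂ J] [CompleteSpace J]
    [NonUnitalNormedRing C] [StarRing C] [CStarRing C] [NormedSpace ℂ C]
    [IsScalarTower ℂ C C] [SMulCommClass ℂ C C] [StarModule ℂ C] [CompleteSpace C]
    [NonUnitalNormedRing D] [StarRing D] [CStarRing D] [NormedSpace ℂ D]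
    [IsScalarTower ℂ D D] [SMulCommClass ℂ D D] [StarModule ℂ D] [CompleteSpace D]
    (φ : I →⋆ₙₐ[ℂ] A) (ψ : A →⋆ₙₐ[ℂ] B)
    (π : J →⋆ₙₐ[ℂ] C) (ρ : C →⋆ₙₐ[ℂ] D)
    (η : I →⋆ₙₐ[ℂ] J) (ζ : A →⋆ₙₐ[ℂ] C) (ω : B →⋆ₙₐ[ℂ] D)
    -- the bottom row is exact
    (hπ_inj : Function.Injective π) (hρ_surj : Function.Surjective ρ)
    (hbotexact : ∀ c : C, ρ c = 0 ↔ c ∈ Set.range π)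
    -- the diagram commutes
    (hcomm₁ : ∀ x : I, ζ (φ x) = π (η x))
    (hcomm₂ : ∀ a : A, ω (ψ a) = ρ (ζ a))
    -- the vertical maps are injective
    (hη_inj : Function.Injective η) (hζ_inj : Function.Injective ζ)
    (hω_inj : Function.Injective ω)
    -- the vertical maps are nondegenerate
    (hη_nd : closure (Submodule.span ℂ {y : J | ∃ x : I, ∃ j : J, y = η x * j} : Set J)
      = Set.univ)
    (hζ_nd : closure (Submodule.span ℂ {y : C | ∃ a : A, ∃ c : C, y = ζ a * c} : Set C)
      = Set.univ)
    (hω_nd : closure (Submodule.span ℂ {y : D | ∃ b : B, ∃ d : D, y = ω b * d} : Set D)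
      = Set.univ)
    -- φ(I) is a closed two-sided ideal of A
    (hclosed : IsClosed (Set.range φ))
    (hideal : ∀ a ∈ Set.range φ, ∀ x : A, a * x ∈ Set.range φ ∧ x * a ∈ Set.range φ)
    -- ψ is surjective
    (hψ_surj : Function.Surjective ψ) :
    Function.Injective φ ∧ Function.Surjective ψ ∧
      (∀ a : A, ψ a = 0 ↔ a ∈ Set.range φ) := by
  
  letI : NonUnitalCStarAlgebra I := { }
  letI : NonUnitalCStarAlgebra A := { }
  letI : NonUnitalCStarAlgebra B := { }
  letI : NonUnitalCStarAlgebra J := { }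
  letI : NonUnitalCStarAlgebra C := { }
  letI : NonUnitalCStarAlgebra D := { }
  refine ⟨?_, hψ_surj, ?_⟩
  · intro x y h
    apply hη_inj
    apply hπ_inj
    rw [← hcomm₁, ← hcomm₁, h]
  · intro a
    constructor
    · intro ha
      have h1 : ρ (ζ a) = 0 := by rw [← hcomm₂, ha, map_zero]
      obtain ⟨j, hj⟩ := (hbotexact (ζ a)).mp h1
      have hmem : a ∈ closure (Set.range φ) := by
        rw [Metric.mem_closure_iff]
        intro ε hε
        obtain ⟨e, he⟩ := aux_key η hη_inj hη_nd j hε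
        refine ⟨φ e * a, (hideal (φ e) ⟨e, rfl⟩ a).1, ?_⟩
        rw [dist_eq_norm]
        have hz : ζ (a - φ e * a) = π (j - η e * j) := by
          rw [map_sub, map_mul, hcomm₁, ← hj, map_sub, map_mul]
        calc ‖a - φ e * a‖ = ‖ζ (a - φ e * a)‖ :=
              (NonUnitalStarAlgHom.norm_map ζ hζ_inj _).symm
        _ = ‖π (j - η e * j)‖ := by rw [hz]
        _ = ‖j - η e * j‖ := NonUnitalStarAlgHom.norm_map π hπ_inj _
        _ < ε := he
      rwa [hclosed.closure_eq] at hmem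
    · rintro ⟨x, rfl⟩
      apply hω_inj
      rw [hcomm₂, hcomm₁, map_zero]
      exact (hbotexact _).mpr ⟨η x, rfl⟩
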